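/- Let A be an n×n real PSD matrix and S any n×ℓ real matrix. With C = A S and W = Sᵗ A S, the spectral norm approximation error of the Nyström extension satisfies the exact equality ‖A − C W† Cᵗ‖₂ = ‖(I − P_{A^{1/2} S}) A^{1/2}‖₂². -/

import Mathlib

open Matrix
open scoped Matrix.Norms.L2Operator

open scoped ComplexOrder in
/-- The positive semidefinite square root of a positive semidefinite matrix
(the definition `Matrix.PosSemidef.sqrt` of the older Mathlib, since removed). -/
noncomputable def Matrix.PosSemidef.sqrt {n 𝕜 : Type*} [RCLike 𝕜] [Fintype n] [DecidableEq n]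
    {A : Matrix n n 𝕜} (hA : A.PosSemidef) : Matrix n n 𝕜 :=
  hA.1.eigenvectorUnitary.1 * diagonal ((↑) ∘ (√·) ∘ hA.1.eigenvalues) *
    (star hA.1.eigenvectorUnitary : Matrix n n 𝕜)

open scoped Classical in
/-- Moore–Penrose pseudoinverse, defined via the four Penrose conditions. -/
noncomputable def pinv {m n : Type*} [Fintype m] [Fintype n] (M : Matrix m n ℝ) :
    Matrix n m ℝ :=
  if h : ∃ X : Matrix n m ℝ,
      M * X * M = M ∧ X * M * X = X ∧ (M * X)ᵀ = M * X ∧ (X * M)ᵀ = X * M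
  then h.choose else 0

open scoped Classical in
/-- `eigvalsDesc A i` is the `(i+1)`-st largest eigenvalue of `A` (0-based index `i`);
junk value `0` if `A` is not Hermitian or `i` is out of range. -/
noncomputable def eigvalsDesc {n : ℕ} (A : Matrix (Fin n) (Fin n) ℝ) (i : ℕ) : ℝ :=
  if h : A.IsHermitian ∧ i < n then
    h.1.eigenvalues (Tuple.sort h.1.eigenvalues (Fin.rev ⟨i, h.2⟩))
  else 0

/-- The coherence of an `n × k` matrix: `(n/k)` times the maximal squared row norm. -/
noncomputable def coherence {n k : ℕ} (U : Matrix (Fin n) (Fin k) ℝ) : ℝ :=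
  ((n : ℝ) / k) * ⨆ i : Fin n, ∑ j : Fin k, (U i j) ^ 2

/-- The `n × ℓ` matrix consisting of the first `ℓ` columns of the permutation matrix of `σ`
(column `j` is the standard basis vector `e_{σ j}`). -/
def sampleMatrix {n ℓ : ℕ} (hl : ℓ ≤ n) (σ : Equiv.Perm (Fin n)) :
    Matrix (Fin n) (Fin ℓ) ℝ :=
  Matrix.of fun i j => if σ (Fin.castLE hl j) = i then (1 : ℝ) else 0

/- Auxiliary lemmas for the Moore–Penrose pseudoinverse. -/

private lemma uEu_mul {k : ℕ} {U : Matrix (Fin k) (Fin k) ℝ} (hU : star U * U = 1)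
    (e f : Fin k → ℝ) :
    (U * diagonal e * star U) * (U * diagonal f * star U)
      = U * diagonal (fun i => e i * f i) * star U := by
  simp only [Matrix.mul_assoc]
  rw [← Matrix.mul_assoc (star U) U, hU, one_mul,
    ← Matrix.mul_assoc (diagonal e), diagonal_mul_diagonal]

private lemma uEu_symm {k : ℕ} (U : Matrix (Fin k) (Fin k) ℝ) (e : Fin k → ℝ) :
    (U * diagonal e * star U)ᵀ = U * diagonal e * star U := by
  rw [← conjTranspose_eq_transpose_of_trivial]
  simp only [conjTranspose_mul, conjTranspose_conjTranspose, star_eq_conjTranspose,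
    diagonal_conjTranspose, Matrix.mul_assoc]
  congr 2

/-- Existence of the Moore–Penrose pseudoinverse for symmetric real matrices,
via the spectral theorem; moreover it may be chosen symmetric. -/
private lemma exists_pinv_sym {k : ℕ} (H : Matrix (Fin k) (Fin k) ℝ) (hH : Hᵀ = H) :
    ∃ X : Matrix (Fin k) (Fin k) ℝ,
      H*X*H = H ∧ X*H*X = X ∧ (H*X)ᵀ = H*X ∧ (X*H)ᵀ = X*H ∧ Xᵀ = X := by
  have hHe : H.IsHermitian := by
    rwa [Matrix.IsHermitian, conjTranspose_eq_transpose_of_trivial]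
  set U : Matrix (Fin k) (Fin k) ℝ := (hHe.eigenvectorUnitary : Matrix (Fin k) (Fin k) ℝ)
    with hUdef
  have hU : star U * U = 1 := Matrix.mem_unitaryGroup_iff'.mp (hHe.eigenvectorUnitary).2
  set f : Fin k → ℝ := RCLike.ofReal ∘ hHe.eigenvalues with hf
  have hsp : H = U * diagonal f * star U := hHe.spectral_theorem
  set g : Fin k → ℝ := fun i => if f i = 0 then 0 else (f i)⁻¹ with hg
  have hfgf : (fun i => (f i * g i) * f i) = f := by
    funext i; by_cases h : f i = 0 <;> simp [hg, h]
  have hgfg : (fun i => (g i * f i) * g i) = g := by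
    funext i; by_cases h : f i = 0 <;> simp [hg, h]
  refine ⟨U * diagonal g * star U, ?_, ?_, ?_, ?_, uEu_symm U g⟩
  · rw [hsp, uEu_mul hU, uEu_mul hU, hfgf]
  · rw [hsp, uEu_mul hU, uEu_mul hU, hgfg]
  · rw [hsp, uEu_mul hU]; exact uEu_symm U _
  · rw [hsp, uEu_mul hU]; exact uEu_symm U _

/-- If `Y` is a generalized inverse of `MᵀM` satisfying the relevant Penrose conditions,
then `M Y MᵀM = M`. -/
private lemma cancel_aux {n ℓ : ℕ} (M : Matrix (Fin n) (Fin ℓ) ℝ) (Y : Matrix (Fin ℓ) (Fin ℓ) ℝ)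
    (h1 : (Mᵀ*M)*Y*(Mᵀ*M) = Mᵀ*M) (h4 : (Y*(Mᵀ*M))ᵀ = Y*(Mᵀ*M)) :
    M*(Y*(Mᵀ*M)) = M := by
  set H := Mᵀ*M with hH
  set K := Y*H with hKdef
  have hKs : Kᵀ = K := h4
  have hHK : H*K = H := by rw [hKdef, ← Matrix.mul_assoc, h1]
  have hz : (M*K - M)ᵀ*(M*K - M) = 0 := by
    have e1 : (M*K - M)ᵀ = K*Mᵀ - Mᵀ := by
      rw [transpose_sub, transpose_mul, hKs]
    rw [e1]
    have t1 : (K*Mᵀ)*(M*K) = K*H := by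
      rw [Matrix.mul_assoc, ← Matrix.mul_assoc Mᵀ M K, ← hH, hHK]
    have t2 : (K*Mᵀ)*M = K*H := by rw [Matrix.mul_assoc, ← hH]
    have t3 : Mᵀ*(M*K) = H := by rw [← Matrix.mul_assoc, ← hH, hHK]
    rw [Matrix.sub_mul, Matrix.mul_sub, Matrix.mul_sub, t1, t2, t3, ← hH]
    simp
  have hz' : (M*K - M)ᴴ*(M*K - M) = 0 := by
    rw [conjTranspose_eq_transpose_of_trivial]; exact hz
  have hN := Matrix.conjTranspose_mul_self_eq_zero.mp hz'
  rwa [sub_eq_zero] at hN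

/-- Existence of the Moore–Penrose pseudoinverse of an arbitrary real matrix. -/
private lemma exists_pinv {n ℓ : ℕ} (M : Matrix (Fin n) (Fin ℓ) ℝ) :
    ∃ X : Matrix (Fin ℓ) (Fin n) ℝ,
      M * X * M = M ∧ X * M * X = X ∧ (M * X)ᵀ = M * X ∧ (X * M)ᵀ = X * M := by
  obtain ⟨G, hG1, hG2, hG3, hG4, hGs⟩ := exists_pinv_sym (Mᵀ*M)
    (by rw [transpose_mul, transpose_transpose])
  have hMG : M*(G*(Mᵀ*M)) = M := cancel_aux M G hG1 hG4
  refine ⟨G*Mᵀ, ?_, ?_, ?_, ?_⟩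
  · calc M*(G*Mᵀ)*M = M*(G*(Mᵀ*M)) := by simp only [Matrix.mul_assoc]
    _ = M := hMG
  · calc (G*Mᵀ)*M*(G*Mᵀ) = (G*(Mᵀ*M)*G)*Mᵀ := by simp only [Matrix.mul_assoc]
    _ = G*Mᵀ := by rw [hG2]
  · rw [transpose_mul, transpose_mul, transpose_transpose, hGs, Matrix.mul_assoc]
  · calc ((G*Mᵀ)*M)ᵀ = (G*(Mᵀ*M))ᵀ := by simp only [Matrix.mul_assoc]
    _ = G*(Mᵀ*M) := hG4
    _ = (G*Mᵀ)*M := by simp only [Matrix.mul_assoc]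

/-- `pinv M` satisfies the four Penrose conditions. -/
private lemma pinv_spec {n ℓ : ℕ} (M : Matrix (Fin n) (Fin ℓ) ℝ) :
    M * pinv M * M = M ∧ pinv M * M * pinv M = pinv M ∧
      (M * pinv M)ᵀ = M * pinv M ∧ (pinv M * M)ᵀ = pinv M * M := by
  have hex := exists_pinv M
  rw [pinv, dif_pos hex]
  exact hex.choose_spec

private lemma psd_sqrt_mul_self {n : ℕ} {A : Matrix (Fin n) (Fin n) ℝ} (hA : A.PosSemidef) :
    hA.sqrt * hA.sqrt = A := by
  set U : Matrix (Fin n) (Fin n) ℝ := (hA.1.eigenvectorUnitary : Matrix (Fin n) (Fin n) ℝ)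
    with hUdef
  have hU : star U * U = 1 := Matrix.mem_unitaryGroup_iff'.mp (hA.1.eigenvectorUnitary).2
  have hsp : A = U * diagonal (RCLike.ofReal ∘ hA.1.eigenvalues) * star U :=
    hA.1.spectral_theorem
  unfold Matrix.PosSemidef.sqrt
  rw [uEu_mul hU]
  conv_rhs => rw [hsp]
  congr 2
  congr 1
  funext i
  simp [Real.mul_self_sqrt (hA.eigenvalues_nonneg i)]

private lemma psd_sqrt_isHermitian {n : ℕ} {A : Matrix (Fin n) (Fin n) ℝ} (hA : A.PosSemidef) :
    (hA.sqrt).IsHermitian := by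
  unfold Matrix.IsHermitian
  rw [conjTranspose_eq_transpose_of_trivial]
  exact uEu_symm _ _

/-- The key matrix identity behind the Nyström error formula. -/
private lemma nystrom_matrix_identity {n ℓ : ℕ}
    (A : Matrix (Fin n) (Fin n) ℝ) (hA : A.PosSemidef)
    (S : Matrix (Fin n) (Fin ℓ) ℝ)
    (C : Matrix (Fin n) (Fin ℓ) ℝ) (W : Matrix (Fin ℓ) (Fin ℓ) ℝ)
    (hC : C = A * S) (hW : W = Sᵀ * A * S) :
    A - C * pinv W * Cᵀ =
      (((1 : Matrix (Fin n) (Fin n) ℝ) - (hA.sqrt * S) * pinv (hA.sqrt * S)) * hA.sqrt)ᴴ *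
      (((1 : Matrix (Fin n) (Fin n) ℝ) - (hA.sqrt * S) * pinv (hA.sqrt * S)) * hA.sqrt) := by
  set B := hA.sqrt with hBdef
  have hBB : B*B = A := psd_sqrt_mul_self hA
  have hBs : Bᵀ = B := by
    rw [← conjTranspose_eq_transpose_of_trivial]
    exact psd_sqrt_isHermitian hA
  set M := B*S with hMdef
  have hMt : Mᵀ = Sᵀ*B := by rw [hMdef, transpose_mul, hBs]
  have hWM : W = Mᵀ*M := by
    rw [hW, hMt, hMdef, ← hBB]; simp only [Matrix.mul_assoc]
  have hWs : Wᵀ = W := by rw [hWM, transpose_mul, transpose_transpose]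
  have hCM : C = B*M := by rw [hC, ← hBB, hMdef, Matrix.mul_assoc]
  obtain ⟨hX1, hX2, hX3, hX4⟩ := pinv_spec M
  obtain ⟨hY1, hY2, hY3, hY4⟩ := pinv_spec W
  set X := pinv M with hXdef
  set Y := pinv W with hYdef
  clear_value B X Y
  clear hBdef hXdef hYdef hW hC
  have hMdef' : M = B * S := hMdef
  clear_value M
  have hCt : Cᵀ = Mᵀ*B := by rw [hCM, transpose_mul, hBs]
  -- Penrose-type facts for `Yᵀ`
  have hY1' : W*Yᵀ*W = W := by
    have h := congrArg Matrix.transpose hY1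
    rw [transpose_mul, transpose_mul, hWs] at h
    rw [Matrix.mul_assoc]; exact h
  have hY4' : (Yᵀ*W)ᵀ = Yᵀ*W := by
    have h1 : (Yᵀ*W)ᵀ = W*Y := by rw [transpose_mul, transpose_transpose, hWs]
    have h2 : Yᵀ*W = W*Y := by rw [← hY3, transpose_mul, hWs]
    rw [h1, h2]
  have hMY : M*(Y*(Mᵀ*M)) = M := by
    apply cancel_aux <;> rw [← hWM] <;> assumption
  have hMY' : M*(Yᵀ*(Mᵀ*M)) = M := by
    apply cancel_aux <;> rw [← hWM] <;> assumption
  have hQtP : (M*Yᵀ*Mᵀ)*(M*X) = M*X := by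
    calc (M*Yᵀ*Mᵀ)*(M*X) = M*(Yᵀ*(Mᵀ*M))*X := by simp only [Matrix.mul_assoc]
    _ = M*X := by rw [hMY']
  have hPQ : (M*X)*(M*Y*Mᵀ) = M*Y*Mᵀ := by
    calc (M*X)*(M*Y*Mᵀ) = (M*X*M)*(Y*Mᵀ) := by simp only [Matrix.mul_assoc]
    _ = M*(Y*Mᵀ) := by rw [hX1]
    _ = M*Y*Mᵀ := by rw [Matrix.mul_assoc]
  have hPQ2 : (M*X)*(M*Y*Mᵀ) = M*X := by
    have h := congrArg Matrix.transpose hQtP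
    rw [transpose_mul, hX3, transpose_mul, transpose_mul, transpose_transpose,
      transpose_transpose] at h
    simpa only [Matrix.mul_assoc] using h
  have hQeqP : M*Y*Mᵀ = M*X := by rw [← hPQ, hPQ2]
  have hCYC : C * Y * Cᵀ = B*(M*X)*B := by
    rw [hCt, hCM, ← hQeqP]
    simp only [Matrix.mul_assoc]
  have hPP : (M*X)*(M*X) = M*X := by
    calc (M*X)*(M*X) = (M*X*M)*X := by simp only [Matrix.mul_assoc]
    _ = M*X := by rw [hX1]
  have hRHS : (((1 : Matrix (Fin n) (Fin n) ℝ) - M*X) * B)ᴴ *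
      (((1 : Matrix (Fin n) (Fin n) ℝ) - M*X) * B) = B*B - B*(M*X)*B := by
    rw [conjTranspose_eq_transpose_of_trivial, transpose_mul, transpose_sub, transpose_one,
      hX3, hBs]
    have hproj : ((1 : Matrix (Fin n) (Fin n) ℝ) - M*X) * ((1 : Matrix (Fin n) (Fin n) ℝ) - M*X)
        = 1 - M*X := by
      rw [Matrix.mul_sub, Matrix.sub_mul, Matrix.sub_mul, hPP]
      simp
    calc B*(1 - M*X)*(((1:Matrix (Fin n) (Fin n) ℝ) - M*X)*B)
        = B*(((1 - M*X)*(1 - M*X))*B) := by simp only [Matrix.mul_assoc]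
      _ = B*((1 - M*X)*B) := by rw [hproj]
      _ = B*B - B*(M*X)*B := by
          rw [Matrix.sub_mul, one_mul, Matrix.mul_sub]
          simp only [Matrix.mul_assoc]
  rw [hCYC, hRHS, ← hBB]

/-- For a PSD matrix `A` and any sampling matrix `S`, with `C = A S` and
`W = Sᵗ A S`, the spectral norm error of the Nyström extension satisfies
`‖A − C W† Cᵗ‖₂ = ‖(I − P_{A^{1/2} S}) A^{1/2}‖₂²`. -/
theorem nystrom_spectral_error_eq {n ℓ : ℕ}
    (A : Matrix (Fin n) (Fin n) ℝ) (hA : A.PosSemidef)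
    (S : Matrix (Fin n) (Fin ℓ) ℝ)
    (C : Matrix (Fin n) (Fin ℓ) ℝ) (W : Matrix (Fin ℓ) (Fin ℓ) ℝ)
    (hC : C = A * S) (hW : W = Sᵀ * A * S) :
    ‖A - C * pinv W * Cᵀ‖ =
      ‖((1 : Matrix (Fin n) (Fin n) ℝ) - (hA.sqrt * S) * pinv (hA.sqrt * S)) * hA.sqrt‖ ^ 2 := by
  rw [nystrom_matrix_identity A hA S C W hC hW,
    Matrix.l2_opNorm_conjTranspose_mul_self, sq]
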